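/- Under Assumption (basic coarse structure), applying m steps of forward-backward splitting ζ^{j+1} := prox_{τ_H G_H}(ζ^j − τ_H ∇F_H^k(ζ^j)) to the shifted coarse objective F_H^k(ζ) := F_H(ζ) + ⟨w, ζ − ζ⁰⟩ with w := g₀ − ∇F_H(ζ⁰) for a given vector g₀ ∈ X_H, one obtains ⟨g₀, ζ^m − ζ⁰⟩ + (ε/(2τ_H)) Σ_{j=0}^{m−1} ‖ζ^{j+1} − ζ^j‖² ≤ G_H(ζ⁰) − G_H(ζ^m), where ε := 2 − τ_H L_H > 0. -/

import Mathlib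

open RealInnerProductSpace

/-- `G` is proper, convex and lower semicontinuous as an extended-real-valued function. -/
def ProperConvexLsc {X : Type*} [NormedAddCommGroup X] [InnerProductSpace ℝ X]
    (G : X → EReal) : Prop :=
  (∃ x, G x ≠ ⊤) ∧ (∀ x, G x ≠ ⊥) ∧
  (∀ x y : X, ∀ a b : ℝ, 0 ≤ a → 0 ≤ b → a + b = 1 →
    G (a • x + b • y) ≤ (a : EReal) * G x + (b : EReal) * G y) ∧
  LowerSemicontinuous G

/-- `p` is the proximal point `prox_{τG}(x)`, i.e. it minimises `z ↦ G z + ‖z - x‖²/(2τ)`. -/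
def IsProx {X : Type*} [NormedAddCommGroup X] [InnerProductSpace ℝ X]
    (τ : ℝ) (G : X → EReal) (x p : X) : Prop :=
  ∀ z : X, G p + ((‖p - x‖ ^ 2 / (2 * τ) : ℝ) : EReal)
    ≤ G z + ((‖z - x‖ ^ 2 / (2 * τ) : ℝ) : EReal)

private lemma hasDerivAt_comp_line {X : Type*} [NormedAddCommGroup X] [InnerProductSpace ℝ X]
    [CompleteSpace X]
    (F : X → ℝ) (f : X → X) (hgrad : ∀ x, HasGradientAt F (f x) x) (x v : X) (t : ℝ) :
    HasDerivAt (fun s : ℝ => F (x + s • v)) ⟪f (x + t • v), v⟫ t := by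
  have h1 : HasDerivAt (fun s : ℝ => x + s • v) v t := by
    simpa using ((hasDerivAt_id t).smul_const v).const_add x
  have h2 := (hgrad (x + t • v)).hasFDerivAt
  simpa [InnerProductSpace.toDual_apply_apply, Function.comp_def] using h2.comp_hasDerivAt t h1

private lemma grad_convex_ineq {X : Type*} [NormedAddCommGroup X] [InnerProductSpace ℝ X]
    [CompleteSpace X]
    (F : X → ℝ) (f : X → X) (hFconv : ConvexOn ℝ Set.univ F)
    (hgrad : ∀ x, HasGradientAt F (f x) x) (x y : X) :
    ⟪f x, y - x⟫ ≤ F y - F x := by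
  have hline := hasDerivAt_comp_line F f hgrad x (y - x) 0
  simp only [zero_smul, add_zero] at hline
  have hφconv : ConvexOn ℝ Set.univ (fun s : ℝ => F (x + s • (y - x))) := by
    have h := hFconv.comp_affineMap (AffineMap.lineMap x y)
    have heq : (fun s : ℝ => F (x + s • (y - x))) = F ∘ (AffineMap.lineMap x y) := by
      funext s
      simp [AffineMap.lineMap_apply, vsub_eq_sub, vadd_eq_add, add_comm]
    rw [heq]
    simpa using h
  have hs := hφconv.le_slope_of_hasDerivAt (Set.mem_univ (0:ℝ)) (Set.mem_univ (1:ℝ))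
    one_pos hline
  rw [slope_def_field] at hs
  simpa using hs

private lemma descent_lemma {X : Type*} [NormedAddCommGroup X] [InnerProductSpace ℝ X]
    [CompleteSpace X]
    (F : X → ℝ) (f : X → X) (L : ℝ) (hgrad : ∀ x, HasGradientAt F (f x) x)
    (hlip : ∀ x y, ‖f x - f y‖ ≤ L * ‖x - y‖) (x y : X) :
    F y ≤ F x + ⟪f x, y - x⟫ + L / 2 * ‖y - x‖ ^ 2 := by
  set v := y - x with hv
  have key : ∀ s ∈ Set.Icc (0:ℝ) 1,
      F (x + s • v) ≤ F x + s * ⟪f x, v⟫ + L * ‖v‖ ^ 2 * s ^ 2 / 2 := by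
    apply image_le_of_deriv_right_le_deriv_boundary
      (f := fun s : ℝ => F (x + s • v)) (f' := fun s : ℝ => ⟪f (x + s • v), v⟫)
      (B := fun s : ℝ => F x + s * ⟪f x, v⟫ + L * ‖v‖ ^ 2 * s ^ 2 / 2)
      (B' := fun s : ℝ => ⟪f x, v⟫ + L * ‖v‖ ^ 2 * s)
    case hf =>
      exact fun s _ => (hasDerivAt_comp_line F f hgrad x v s).continuousAt.continuousWithinAt
    case hf' =>
      exact fun s _ => (hasDerivAt_comp_line F f hgrad x v s).hasDerivWithinAt
    case ha => simp
    case hB => fun_prop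
    case hB' =>
      intro s _
      have h1 : HasDerivAt (fun s : ℝ => F x + s * ⟪f x, v⟫) ⟪f x, v⟫ s := by
        simpa using ((hasDerivAt_id s).mul_const ⟪f x, v⟫).const_add (F x)
      have h2 : HasDerivAt (fun s : ℝ => L * ‖v‖ ^ 2 * s ^ 2 / 2) (L * ‖v‖ ^ 2 * s) s := by
        have := ((hasDerivAt_pow 2 s).const_mul (L * ‖v‖ ^ 2)).div_const 2
        exact this.congr_deriv (by ring)
      exact (h1.add h2).hasDerivWithinAt
    case bound =>
      intro s hs
      have h1 : ⟪f (x + s • v) - f x, v⟫ ≤ L * s * ‖v‖ ^ 2 := by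
        calc ⟪f (x + s • v) - f x, v⟫ ≤ ‖f (x + s • v) - f x‖ * ‖v‖ := real_inner_le_norm _ _
          _ ≤ (L * ‖x + s • v - x‖) * ‖v‖ := by
              apply mul_le_mul_of_nonneg_right (hlip _ _) (norm_nonneg v)
          _ = L * s * ‖v‖ ^ 2 := by
              rw [add_sub_cancel_left, norm_smul, Real.norm_eq_abs, abs_of_nonneg hs.1]
              ring
      have h2 : ⟪f (x + s • v), v⟫ = ⟪f x, v⟫ + ⟪f (x + s • v) - f x, v⟫ := by
        rw [inner_sub_left]; ring
      rw [h2]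
      nlinarith [h1]
  have hk := key 1 (by norm_num)
  simp only [one_smul, one_pow, mul_one, one_mul] at hk
  have hyx : x + v = y := by rw [hv]; abel
  rw [hyx] at hk
  linarith

private lemma prox_ne_top {X : Type*} [NormedAddCommGroup X] [InnerProductSpace ℝ X]
    (G : X → EReal) (hbot : ∀ x, G x ≠ ⊥) (z0 : X) (hz0 : G z0 ≠ ⊤)
    (τ : ℝ) (x p : X) (hp : IsProx τ G x p) : G p ≠ ⊤ := by
  intro h
  have h1 := hp z0
  rw [h, EReal.top_add_of_ne_bot (EReal.coe_ne_bot _),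
    (EReal.coe_toReal hz0 (hbot z0)).symm, ← EReal.coe_add] at h1
  exact EReal.coe_ne_top _ (top_le_iff.mp h1)

private lemma prox_vi {X : Type*} [NormedAddCommGroup X] [InnerProductSpace ℝ X]
    (G : X → EReal)
    (hconv : ∀ x y : X, ∀ a b : ℝ, 0 ≤ a → 0 ≤ b → a + b = 1 →
      G (a • x + b • y) ≤ (a : EReal) * G x + (b : EReal) * G y)
    {τ : ℝ} (hτ : 0 < τ) {x p z : X} (hp : IsProx τ G x p)
    {gp gz : ℝ} (hgp : G p = (gp : EReal)) (hgz : G z = (gz : EReal)) :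
    ⟪x - p, z - p⟫ ≤ τ * (gz - gp) := by
  set I : ℝ := ⟪p - x, z - p⟫ with hI
  set N : ℝ := ‖z - p‖ ^ 2 with hN
  have hN0 : 0 ≤ N := by positivity
  have key : ∀ t : ℝ, 0 < t → t ≤ 1 → gp ≤ gz + I / τ + t * N / (2 * τ) := by
    intro t ht ht1
    have hcz := hconv p z (1 - t) t (by linarith) (le_of_lt ht) (by ring)
    rw [hgp, hgz, ← EReal.coe_mul, ← EReal.coe_mul, ← EReal.coe_add] at hcz
    have hprox := hp ((1 - t) • p + t • z)
    rw [hgp] at hprox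
    have hchain : ((gp : ℝ) : EReal) + ((‖p - x‖ ^ 2 / (2 * τ) : ℝ) : EReal)
        ≤ (((1 - t) * gp + t * gz : ℝ) : EReal)
          + ((‖(1 - t) • p + t • z - x‖ ^ 2 / (2 * τ) : ℝ) : EReal) :=
      le_trans hprox (add_le_add_left hcz _)
    rw [← EReal.coe_add, ← EReal.coe_add, EReal.coe_le_coe_iff] at hchain
    have hzt : (1 - t) • p + t • z - x = (p - x) + t • (z - p) := by module
    have hexp : ‖(1 - t) • p + t • z - x‖ ^ 2 = ‖p - x‖ ^ 2 + 2 * t * I + t ^ 2 * N := by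
      rw [hzt, norm_add_sq_real, real_inner_smul_right, norm_smul, Real.norm_eq_abs]
      rw [hI, hN, mul_pow, sq_abs]
      ring
    rw [hexp] at hchain
    have hchain2 : t * gp ≤ t * (gz + I / τ + t * N / (2 * τ)) := by
      have e1 : (‖p - x‖ ^ 2 + 2 * t * I + t ^ 2 * N) / (2 * τ)
          = ‖p - x‖ ^ 2 / (2 * τ) + (t * I / τ + t ^ 2 * N / (2 * τ)) := by
        field_simp
        ring
      rw [e1] at hchain
      have e2 : t * (gz + I / τ + t * N / (2 * τ))
          = t * gz + (t * I / τ + t ^ 2 * N / (2 * τ)) := by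
        field_simp
        ring
      rw [e2]
      linarith
    exact (mul_le_mul_iff_right₀ ht).mp hchain2
  have hstep : gp ≤ gz + I / τ := by
    apply le_of_forall_pos_le_add
    intro ε hε
    set t : ℝ := min 1 (ε * (2 * τ) / (N + 1)) with htdef
    have ht0 : 0 < t := lt_min one_pos (by positivity)
    have ht1 : t ≤ 1 := min_le_left _ _
    have h2 : t * N / (2 * τ) ≤ ε := by
      rw [div_le_iff₀ (by positivity)]
      have h3 : t ≤ ε * (2 * τ) / (N + 1) := min_le_right _ _
      have h4 : t * (N + 1) ≤ ε * (2 * τ) := by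
        rw [← le_div_iff₀ (by positivity)]
        exact h3
      nlinarith
    have := key t ht0 ht1
    linarith
  have hinner : ⟪x - p, z - p⟫ = -I := by
    rw [hI, show x - p = -(p - x) by abel, inner_neg_left]
  rw [hinner]
  have h5 : τ * gp ≤ τ * (gz + I / τ) := (mul_le_mul_iff_right₀ hτ).mpr hstep
  have h6 : τ * (I / τ) = I := by field_simp
  rw [mul_add, h6] at h5
  linarith [h5]

/-- coarse descent lemma: after `m` forward-backward steps on the
shifted coarse objective `F_H + ⟪w, · - ζ⁰⟫ + G_H` with `w = g₀ - ∇F_H(ζ⁰)`,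
`⟨g₀, ζ^m − ζ⁰⟩ + (ε/(2τ_H)) Σ_{j<m} ‖ζ^{j+1} − ζ^j‖² ≤ G_H(ζ⁰) − G_H(ζ^m)`. -/
theorem coarse_descent_lemma
    {X : Type*} [NormedAddCommGroup X] [InnerProductSpace ℝ X] [CompleteSpace X]
    (FH : X → ℝ) (fH : X → X) (LH τH : ℝ)
    (hFconv : ConvexOn ℝ Set.univ FH)
    (hgrad : ∀ x, HasGradientAt FH (fH x) x)
    (hlip : ∀ x y, ‖fH x - fH y‖ ≤ LH * ‖x - y‖)
    (GH : X → EReal) (hGH : ProperConvexLsc GH)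
    (hτ : 0 < τH) (hε : 0 < 2 - τH * LH)
    (g₀ : X) (m : ℕ) (ζ : ℕ → X)
    (w : X) (hw : w = g₀ - fH (ζ 0))
    (hstep : ∀ j < m, IsProx τH GH (ζ j - τH • (fH (ζ j) + w)) (ζ (j + 1))) :
    ((⟪g₀, ζ m - ζ 0⟫
        + (2 - τH * LH) / (2 * τH) * ∑ j ∈ Finset.range m, ‖ζ (j + 1) - ζ j‖ ^ 2 : ℝ) : EReal)
      + GH (ζ m) ≤ GH (ζ 0) := by
  obtain ⟨⟨z0, hz0⟩, hbot, hconv, -⟩ := hGH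
  by_cases htop : GH (ζ 0) = ⊤
  · rw [htop]; exact le_top
  set g : ℕ → ℝ := fun j => (GH (ζ j)).toReal with hg
  have hfin : ∀ j ≤ m, GH (ζ j) = ((g j : ℝ) : EReal) := by
    intro j hj
    match j, hj with
    | 0, _ => exact (EReal.coe_toReal htop (hbot _)).symm
    | (i+1), hj =>
      exact (EReal.coe_toReal
        (prox_ne_top GH hbot z0 hz0 _ _ _ (hstep i (by omega))) (hbot _)).symm
  set c : ℝ := (2 - τH * LH) / (2 * τH) with hc
  have hstep' : ∀ j < m, g (j + 1) - g j + (FH (ζ (j + 1)) - FH (ζ j))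
      + ⟪w, ζ (j + 1) - ζ j⟫ + c * ‖ζ (j + 1) - ζ j‖ ^ 2 ≤ 0 := by
    intro j hj
    have hvi := prox_vi GH hconv hτ (hstep j hj) (hfin (j + 1) (by omega)) (hfin j (by omega))
    set d : X := ζ (j + 1) - ζ j with hd
    have hrw : ⟪ζ j - τH • (fH (ζ j) + w) - ζ (j + 1), ζ j - ζ (j + 1)⟫
        = ‖d‖ ^ 2 + τH * (⟪fH (ζ j), d⟫ + ⟪w, d⟫) := by
      rw [show ζ j - τH • (fH (ζ j) + w) - ζ (j + 1) = -(d + τH • (fH (ζ j) + w)) by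
            rw [hd]; module,
          show ζ j - ζ (j + 1) = -d by rw [hd]; module,
          inner_neg_neg, inner_add_left, real_inner_smul_left, inner_add_left,
          real_inner_self_eq_norm_sq]
    rw [hrw] at hvi
    have hdesc := descent_lemma FH fH LH hgrad hlip (ζ j) (ζ (j + 1))
    rw [← hd] at hdesc
    have hdesc' : τH * FH (ζ (j + 1))
        ≤ τH * (FH (ζ j) + ⟪fH (ζ j), d⟫ + LH / 2 * ‖d‖ ^ 2) :=
      mul_le_mul_of_nonneg_left hdesc (le_of_lt hτ)
    have hc2 : τH * (c * ‖d‖ ^ 2) = ‖d‖ ^ 2 - τH * LH / 2 * ‖d‖ ^ 2 := by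
      rw [hc]
      field_simp
    rw [← mul_le_mul_iff_right₀ hτ]
    calc τH * (g (j + 1) - g j + (FH (ζ (j + 1)) - FH (ζ j)) + ⟪w, d⟫ + c * ‖d‖ ^ 2)
        = τH * (g (j + 1) - g j) + τH * (FH (ζ (j + 1)) - FH (ζ j))
          + τH * ⟪w, d⟫ + τH * (c * ‖d‖ ^ 2) := by ring
      _ ≤ τH * 0 := by
        rw [hc2]
        nlinarith [hvi, hdesc']
  have hsum : g m - g 0 + (FH (ζ m) - FH (ζ 0)) + ⟪w, ζ m - ζ 0⟫
      + c * ∑ j ∈ Finset.range m, ‖ζ (j + 1) - ζ j‖ ^ 2 ≤ 0 := by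
    have h1 : ∑ j ∈ Finset.range m, (g (j + 1) - g j + (FH (ζ (j + 1)) - FH (ζ j))
        + ⟪w, ζ (j + 1) - ζ j⟫ + c * ‖ζ (j + 1) - ζ j‖ ^ 2) ≤ 0 :=
      Finset.sum_nonpos fun j hj => hstep' j (Finset.mem_range.mp hj)
    have h2 : ∑ j ∈ Finset.range m, (g (j + 1) - g j + (FH (ζ (j + 1)) - FH (ζ j))
        + ⟪w, ζ (j + 1) - ζ j⟫ + c * ‖ζ (j + 1) - ζ j‖ ^ 2)
        = (g m - g 0) + (FH (ζ m) - FH (ζ 0)) + ⟪w, ζ m - ζ 0⟫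
          + c * ∑ j ∈ Finset.range m, ‖ζ (j + 1) - ζ j‖ ^ 2 := by
      rw [Finset.sum_add_distrib, Finset.sum_add_distrib, Finset.sum_add_distrib,
        Finset.sum_range_sub g, Finset.sum_range_sub (fun j => FH (ζ j)),
        ← Finset.mul_sum, ← inner_sum, Finset.sum_range_sub ζ]
    rw [h2] at h1
    exact h1
  have hconvF := grad_convex_ineq FH fH hFconv hgrad (ζ 0) (ζ m)
  have hsplit : ⟪g₀, ζ m - ζ 0⟫ = ⟪w, ζ m - ζ 0⟫ + ⟪fH (ζ 0), ζ m - ζ 0⟫ := by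
    rw [hw, inner_sub_left]
    ring
  rw [hfin m le_rfl, hfin 0 (Nat.zero_le m), ← EReal.coe_add, EReal.coe_le_coe_iff]
  rw [hsplit]
  linarith
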